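/- A ring R is Zhou nil-clean if and only if every square element of R is the sum of two tripotents and a nilpotent that pairwise commute. -/

import Mathlib

section CommCore
variable {S : Type*} [CommRing S]

private lemma nadd {x y : S} (hx : IsNilpotent x) (hy : IsNilpotent y) :
    IsNilpotent (x + y) := (Commute.all x y).isNilpotent_add hx hy

private lemma nmulr {x : S} (y : S) (hx : IsNilpotent x) : IsNilpotent (x * y) :=
  (Commute.all x y).isNilpotent_mul_right hx

private lemma nof_pow {x : S} {k : ℕ} (h : IsNilpotent (x ^ k)) : IsNilpotent x := by
  obtain ⟨n, hn⟩ := h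
  exact ⟨k * n, by rw [pow_mul, hn]⟩

private lemma bez (x y : S) : ∀ i j : ℕ, ∃ U V : S, (x + y) ^ (i + j) = U * x ^ i + V * y ^ j := by
  intro i
  induction i with
  | zero =>
    intro j
    exact ⟨(x + y) ^ j, 0, by simp⟩
  | succ i ih =>
    intro j
    induction j with
    | zero => exact ⟨0, (x + y) ^ (i + 1), by simp⟩
    | succ j ihj =>
      obtain ⟨U1, V1, h1⟩ := ih (j + 1)
      obtain ⟨U2, V2, h2⟩ := ihj
      refine ⟨U1 + y * U2, x * V1 + V2, ?_⟩
      have expand : (x + y) ^ ((i+1) + (j+1)) =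
          x * (x + y) ^ (i + (j+1)) + y * (x + y) ^ ((i+1) + j) := by
        have e1 : (i+1) + (j+1) = (i + (j+1)) + 1 := by omega
        rw [e1, pow_succ]
        have e2 : i + (j+1) = (i+1) + j := by omega
        rw [e2]
        ring
      rw [expand, h1, h2]
      ring

private lemma idem_pow {e : S} (he : e * e = e) : ∀ n : ℕ, e ^ (n + 1) = e := by
  intro n
  induction n with
  | zero => simp
  | succ n ih => rw [pow_succ, ih, he]

private lemma pow_mul_idem {x e : S} (hxe : x * e = x) (n : ℕ) : x ^ (n + 1) * e = x ^ (n + 1) := by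
  rw [pow_succ, mul_assoc, hxe]

private lemma split {e x y : S} (he : e * e = e) (hxe : x * e = x) (hye : y * e = y)
    (hsum : x + y = e) (hnil : IsNilpotent (x * y)) :
    ∃ (E U V : S) (m : ℕ), E * E = E ∧ E * e = E ∧ e - E = U * x ^ (m + 1) ∧
      E = V * y ^ (m + 1) := by
  obtain ⟨k, hk⟩ := hnil
  have hxy : (x * y) ^ (k + 1) = 0 := by rw [pow_succ, hk, zero_mul]
  obtain ⟨U, V, hb⟩ := bez x y (k + 1) (k + 1)
  rw [hsum] at hb
  have he2 : e ^ ((k+1) + (k+1)) = e := by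
    have h : (k+1) + (k+1) = (k + (k+1)) + 1 := by omega
    rw [h]; exact idem_pow he _
  rw [he2] at hb
  refine ⟨V * y ^ (k + 1), U, V, k, ?_, ?_, ?_, rfl⟩
  · -- E*E = E
    have hEe : V * y ^ (k+1) * e = V * y ^ (k+1) := by
      rw [mul_assoc, pow_mul_idem hye k]
    have hzero : (V * y ^ (k+1)) * (U * x ^ (k+1)) = 0 := by
      have : (V * y ^ (k+1)) * (U * x ^ (k+1)) = (U * V) * (x * y) ^ (k+1) := by
        rw [mul_pow]; ring
      rw [this, hxy, mul_zero]
    calc (V * y ^ (k+1)) * (V * y ^ (k+1))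
        = (V * y ^ (k+1)) * e - (V * y ^ (k+1)) * (U * x ^ (k+1)) := by
          rw [hb]; ring
      _ = V * y ^ (k+1) := by rw [hEe, hzero, sub_zero]
  · rw [mul_assoc, pow_mul_idem hye k]
  · rw [hb]; ring

private lemma corner2 {e b : S} (he : e * e = e) (hbe : b * e = b)
    (hnil : IsNilpotent (b * b - b)) :
    ∃ p : S, p ^ 3 = p ∧ p * e = p ∧ IsNilpotent (b - p) := by
  have hsum : (e - b) + b = e := by ring
  have hxe : (e - b) * e = e - b := by linear_combination he - hbe
  have hprod : (e - b) * b = (b * b - b) * (-1) := by linear_combination hbe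
  have hnilp : IsNilpotent ((e - b) * b) := by rw [hprod]; exact nmulr _ hnil
  obtain ⟨E, U, V, m, hEE, hEe, hcompl, hEform⟩ := split he hxe hbe hsum hnilp
  refine ⟨E, ?_, hEe, ?_⟩
  · calc E ^ 3 = (E * E) * E := by ring
      _ = E := by rw [hEE, hEE]
  · have key : b - E = (b * b - b) * (-(U * (e - b) ^ m) + V * b ^ m) := by
      have hsplit : b - E = b * (e - E) + (b - e) * E := by
        linear_combination hEe - hbe
      rw [hsplit, hcompl, hEform, pow_succ, pow_succ]
      linear_combination (U * (e - b) ^ m - V * b ^ m) * hbe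
    rw [key]
    exact nmulr _ hnil

private lemma trip {e z t : S} (he : e * e = e) (hze : z * e = z) (ht2 : 2 * t = e)
    (hte : t * e = t) (hnil : IsNilpotent (z ^ 3 - z)) :
    ∃ p : S, p ^ 3 = p ∧ p * e = p ∧ IsNilpotent (z - p) := by
  have hz2e : z ^ 2 * e = z ^ 2 := by rw [pow_two, mul_assoc, hze]
  have hx1e : (e - z ^ 2) * e = e - z ^ 2 := by linear_combination he - hz2e
  have hsum1 : (e - z ^ 2) + z ^ 2 = e := by ring
  have hprod1 : (e - z ^ 2) * z ^ 2 = (z ^ 3 - z) * (-z) := by linear_combination z * hze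
  have hnil1 : IsNilpotent ((e - z ^ 2) * z ^ 2) := by rw [hprod1]; exact nmulr _ hnil
  obtain ⟨E, U1, V1, m1, hEE, hEe, hcompl1, hEform1⟩ := split he hx1e hz2e hsum1 hnil1
  have hA : IsNilpotent (z * (e - E)) := by
    have key : z * (e - E) = (z ^ 3 - z) * (-(U1 * (e - z ^ 2) ^ m1)) := by
      rw [hcompl1, pow_succ]
      linear_combination (U1 * (e - z ^ 2) ^ m1) * hze
    rw [key]; exact nmulr _ hnil
  have hB : IsNilpotent (z ^ 2 * E - E) := by
    have key : z ^ 2 * E - E = (z ^ 3 - z) * (z * (V1 * (z ^ 2) ^ m1)) := by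
      rw [hEform1, pow_succ]; ring
    rw [key]; exact nmulr _ hnil
  set x' := t * E * (z + E) with hx'def
  set y' := t * E * (E - z) with hy'def
  have hx'E : x' * E = x' := by rw [hx'def]; linear_combination (t * (z + E)) * hEE
  have hy'E : y' * E = y' := by rw [hy'def]; linear_combination (t * (E - z)) * hEE
  have hsum' : x' + y' = E := by
    rw [hx'def, hy'def]; linear_combination (2 * t) * hEE + E * ht2 + hEe
  have hnil' : IsNilpotent (x' * y') := by
    have key : x' * y' = (z ^ 2 * E - E) * (-(t * t * E * E)) := by
      rw [hx'def, hy'def]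
      linear_combination (t * t * E * E + t * t * z ^ 2 * E) * hEE
    rw [key]; exact nmulr _ hB
  obtain ⟨E', U2, V2, m2, hE'E', hE'E, hcompl2, hE'form⟩ := split hEE hx'E hy'E hsum' hnil'
  have hE'e : E' * e = E' := by
    calc E' * e = (E' * E) * e := by rw [hE'E]
      _ = E' * (E * e) := by ring
      _ = E' * E := by rw [hEe]
      _ = E' := hE'E
  refine ⟨E - 2 * E', ?_, ?_, ?_⟩
  · linear_combination (E + 1 - 6 * E') * hEE + (12 * E - 8 * E' - 8) * hE'E' + 6 * hE'E
  · linear_combination hEe - 2 * hE'e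
  · have hdecomp : z - (E - 2 * E') = z * (e - E) + (z - E) * (E - E') + (z + E) * E' := by
      linear_combination -hze + hEE - 2 * hE'E
    have key2 : (z - E) * x' = (z ^ 2 * E - E) * t := by
      rw [hx'def]; linear_combination (-(t * (E + 1))) * hEE
    have key3 : (z + E) * y' = (z ^ 2 * E - E) * (-t) := by
      rw [hy'def]; linear_combination (t * (E + 1)) * hEE
    have h2 : IsNilpotent ((z - E) * (E - E')) := by
      have : (z - E) * (E - E') = ((z ^ 2 * E - E) * t) * (U2 * x' ^ m2) := by
        rw [hcompl2, pow_succ]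
        linear_combination (U2 * x' ^ m2) * key2
      rw [this, mul_assoc]
      exact nmulr _ hB
    have h3 : IsNilpotent ((z + E) * E') := by
      have : (z + E) * E' = ((z ^ 2 * E - E) * (-t)) * (V2 * y' ^ m2) := by
        rw [hE'form, pow_succ]
        linear_combination (V2 * y' ^ m2) * key3
      rw [this, mul_assoc]
      exact nmulr _ hB
    rw [hdecomp]
    exact nadd (nadd hA h2) h3

private lemma alpha_part {e' y : S} {α s r nn c : ℤ} {M : ℕ}
    (he' : e' * e' = e') (hye : y * e' = y)
    (hα : α ^ 2 + 1 = 5 ^ M * s) (hr : 2 * α - 1 = 5 * r)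
    (hninv : 2 * α * nn = 1 + 5 ^ M * c)
    (h5M : (5 : S) ^ M * e' = 0) (h5nil : IsNilpotent ((5 : S) * e'))
    (hnu : IsNilpotent (y * y + e')) :
    ∃ p w : S, p ^ 3 = p ∧ p * e' = p ∧ IsNilpotent w ∧ y = p + p + w := by
  set A : S := ((α : ℤ) : S) with hAdef
  set N : S := ((nn : ℤ) : S) with hNdef
  -- casts
  have hαS : A ^ 2 + 1 = (5 : S) ^ M * ((s : ℤ) : S) := by
    have h := congrArg (fun n : ℤ => ((n : S))) hα
    push_cast at h
    exact h
  have hrS : 2 * A - 1 = 5 * ((r : ℤ) : S) := by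
    have h := congrArg (fun n : ℤ => ((n : S))) hr
    push_cast at h
    exact h
  have hnS : 2 * A * N = 1 + (5 : S) ^ M * ((c : ℤ) : S) := by
    have h := congrArg (fun n : ℤ => ((n : S))) hninv
    push_cast at h
    exact h
  have hA2 : A ^ 2 * e' = -e' := by
    have : (A ^ 2 + 1) * e' = ((s : ℤ) : S) * ((5 : S) ^ M * e') := by
      rw [hαS]; ring
    rw [h5M, mul_zero] at this
    linear_combination this
  -- the two split factors
  set x'' : S := N * e' * (y + A * e') with hxdef
  set y'' : S := N * e' * (A * e' - y) with hydef
  have hxe'' : x'' * e' = x'' := by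
    rw [hxdef]; linear_combination (N * e') * hye + (N * A * e') * he'
  have hye'' : y'' * e' = y'' := by
    rw [hydef]; linear_combination (-(N * e')) * hye + (N * A * e') * he'
  have hsum'' : x'' + y'' = e' := by
    rw [hxdef, hydef]
    have expand : N * e' * (y + A * e') + N * e' * (A * e' - y) = (2 * A * N) * (e' * e') := by
      ring
    rw [expand, he', hnS]
    have : (1 + (5 : S) ^ M * ((c : ℤ) : S)) * e' = e' + ((c : ℤ) : S) * ((5 : S) ^ M * e') := by
      ring
    rw [this, h5M, mul_zero, add_zero]
  have hnil'' : IsNilpotent (x'' * y'') := by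
    have key : x'' * y'' = (y * y + e') * (-(N * N * e' * e')) := by
      rw [hxdef, hydef]
      linear_combination (-(N * N * e' * e')) * he' + (N * N * e' * e' * e') * hA2
    rw [key]; exact nmulr _ hnu
  obtain ⟨Eσ, U3, V3, m3, hEE, hEe, hcompl3, hEform3⟩ := split he' hxe'' hye'' hsum'' hnil''
  -- key products
  have key1 : (y - A * e') * x'' = (y * y + e') * (N * e') := by
    rw [hxdef]
    linear_combination (N * e') * he' + (-(N * e' * e')) * hA2 + (N*e'*A - N*A*e') * hye
  have key2 : (y + A * e') * y'' = (y * y + e') * (-(N * e')) := by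
    rw [hydef]
    linear_combination (-(N * e')) * he' + (N * e' * e') * hA2
  have hF : IsNilpotent ((y - A * e') * (e' - Eσ)) := by
    have : (y - A * e') * (e' - Eσ) = ((y * y + e') * (N * e')) * (U3 * x'' ^ m3) := by
      rw [hcompl3, pow_succ]
      linear_combination (U3 * x'' ^ m3) * key1
    rw [this, mul_assoc]
    exact nmulr _ hnu
  have hG : IsNilpotent ((y + A * e') * Eσ) := by
    have : (y + A * e') * Eσ = ((y * y + e') * (-(N * e'))) * (V3 * y'' ^ m3) := by
      rw [hEform3, pow_succ]
      linear_combination (V3 * y'' ^ m3) * key2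
    rw [this, mul_assoc]
    exact nmulr _ hnu
  -- the tripotent
  set J : S := e' - 2 * Eσ with hJdef
  have hJe : J * e' = J := by rw [hJdef]; linear_combination he' - 2 * hEe
  have hJ2 : J * J = e' := by rw [hJdef]; linear_combination he' - 4 * hEe + 4 * hEE
  have heJ : e' * J = J := by rw [hJdef]; linear_combination he' - 2 * hEe
  have hJ3 : J ^ 3 = J := by
    calc J ^ 3 = (J * J) * J := by ring
      _ = e' * J := by rw [hJ2]
      _ = J := heJ
  have hA2E : A ^ 2 * Eσ = -Eσ := by
    calc A ^ 2 * Eσ = A ^ 2 * (Eσ * e') := by rw [hEe]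
      _ = (A ^ 2 * e') * Eσ := by ring
      _ = -e' * Eσ := by rw [hA2]
      _ = -(Eσ * e') := by ring
      _ = -Eσ := by rw [hEe]
  have hAJ : (A ^ 2 + 1) * J = 0 := by
    rw [hJdef]; linear_combination hA2 - 2 * hA2E
  refine ⟨A ^ 2 * J, y - (A ^ 2 * J + A ^ 2 * J), ?_, ?_, ?_, by ring⟩
  · linear_combination (A ^ 2) ^ 3 * hJ3 + (A ^ 2 * (A ^ 2 - 1)) * hAJ
  · linear_combination A ^ 2 * hJe
  · -- nilpotent part
    have h5J : IsNilpotent ((5 : S) * e' * J * ((r : ℤ) : S)) :=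
      nmulr _ (nmulr _ h5nil)
    have hyy0 : y - A * J = (y - A * e') * (e' - Eσ) + (y + A * e') * Eσ := by
      rw [hJdef]
      linear_combination -hye + A * he' - 2 * A * hEe
    have decomp : y - (A ^ 2 * J + A ^ 2 * J) =
        ((y - A * e') * (e' - Eσ) + (y + A * e') * Eσ) + (-((5 : S) * e' * J * ((r : ℤ) : S) * A)) := by
      rw [← hyy0]
      have h2A : (2 * A - 1) * J = (5 : S) * e' * J * ((r : ℤ) : S) := by
        rw [hrS]
        calc 5 * ((r : ℤ) : S) * J = ((r : ℤ) : S) * ((5 : S) * (J * e')) := by rw [hJe]; ring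
          _ = (5 : S) * e' * J * ((r : ℤ) : S) := by ring
      linear_combination (-A) * h2A
    rw [decomp]
    exact nadd (nadd hF hG) ((nmulr _ h5J).neg)

private lemma int_inv (b r : ℤ) (M : ℕ) :
    ∃ nn c : ℤ, (1 + b * r) * nn = 1 + b ^ M * c := by
  refine ⟨∑ i ∈ Finset.range M, (-(b * r)) ^ i, -(-r) ^ M, ?_⟩
  have hg := geom_sum_mul (-(b * r)) M
  have hpow : (-(b * r)) ^ M = b ^ M * (-r) ^ M := by
    rw [show -(b * r) = b * (-r) by ring, mul_pow]
  linear_combination -hg - hpow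

private lemma alpha_exists : ∀ K : ℕ, ∃ α s r : ℤ,
    α ^ 2 + 1 = 5 ^ (K + 1) * s ∧ 2 * α - 1 = 5 * r := by
  intro K
  induction K with
  | zero => exact ⟨3, 2, 1, by norm_num, by norm_num⟩
  | succ K ih =>
    obtain ⟨α, s, r, hα, hr⟩ := ih
    refine ⟨α - 5 ^ (K + 1) * s, -(r * s) + 5 ^ K * s ^ 2, r - 2 * 5 ^ K * s, ?_, ?_⟩
    · linear_combination hα - (5 ^ (K + 1) * s) * hr
    · linear_combination hr

private lemma tri_add {p q : S} (hp : p ^ 3 = p) (hq : q ^ 3 = q) (hpq : p * q = 0) :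
    (p + q) ^ 3 = p + q := by
  linear_combination hp + hq + (3 * p + 3 * q) * hpq

private lemma core (a : S)
    (h30 : IsNilpotent (30 : S))
    (hg0 : IsNilpotent (a ^ 10 - 5 * a ^ 6 + 4 * a ^ 2))
    (hg1 : IsNilpotent ((a + 1) ^ 10 - 5 * (a + 1) ^ 6 + 4 * (a + 1) ^ 2)) :
    ∃ p q w : S, p ^ 3 = p ∧ q ^ 3 = q ∧ IsNilpotent w ∧ a = p + q + w := by
  obtain ⟨k0, hk0⟩ := h30
  set n : ℕ := k0 + 1 with hndef
  have h30n : (30 : S) ^ n = 0 := by rw [hndef, pow_succ, hk0, zero_mul]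
  -- the three central idempotents
  have hcop1 : IsCoprime ((2 : ℤ) ^ n) ((15 : ℤ) ^ n) :=
    (Int.isCoprime_iff_gcd_eq_one.mpr (by norm_num)).pow
  obtain ⟨u, v, huv⟩ := hcop1
  have hcop2 : IsCoprime ((3 : ℤ) ^ n) ((5 : ℤ) ^ n) :=
    (Int.isCoprime_iff_gcd_eq_one.mpr (by norm_num)).pow
  obtain ⟨u', v', huv'⟩ := hcop2
  set DD : S := ((u : ℤ) : S) * (2 : S) ^ n with hDDdef
  set E2 : S := ((v : ℤ) : S) * (15 : S) ^ n with hE2def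
  have hc1 : DD + E2 = 1 := by
    rw [hDDdef, hE2def]
    have h := congrArg (fun t : ℤ => ((t : S))) huv
    push_cast at h
    linear_combination h
  set E3 : S := DD * (((v' : ℤ) : S) * (5 : S) ^ n) with hE3def
  set E5 : S := DD * (((u' : ℤ) : S) * (3 : S) ^ n) with hE5def
  have hc2 : ((u' : ℤ) : S) * (3 : S) ^ n + ((v' : ℤ) : S) * (5 : S) ^ n = 1 := by
    have h := congrArg (fun t : ℤ => ((t : S))) huv'
    push_cast at h
    linear_combination h
  have pow230 : (2 : S) ^ n * (15 : S) ^ n = (30 : S) ^ n := by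
    rw [← mul_pow]; norm_num
  have pow35 : (3 : S) ^ n * (5 : S) ^ n = (15 : S) ^ n := by
    rw [← mul_pow]; norm_num
  have hE2D : E2 * DD = 0 := by
    rw [hE2def, hDDdef]
    calc ((v : ℤ) : S) * (15 : S) ^ n * (((u : ℤ) : S) * (2 : S) ^ n)
        = ((v : ℤ) : S) * ((u : ℤ) : S) * ((2 : S) ^ n * (15 : S) ^ n) := by ring
      _ = ((v : ℤ) : S) * ((u : ℤ) : S) * (30 : S) ^ n := by rw [pow230]
      _ = 0 := by rw [h30n, mul_zero]
  have hDD15 : DD * (15 : S) ^ n = 0 := by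
    rw [hDDdef]
    calc ((u : ℤ) : S) * (2 : S) ^ n * (15 : S) ^ n
        = ((u : ℤ) : S) * ((2 : S) ^ n * (15 : S) ^ n) := by ring
      _ = ((u : ℤ) : S) * (30 : S) ^ n := by rw [pow230]
      _ = 0 := by rw [h30n, mul_zero]
  have he2 : E2 * E2 = E2 := by linear_combination E2 * hc1 - hE2D
  have hE3E5 : E3 * E5 = 0 := by
    rw [hE3def, hE5def]
    calc DD * (((v' : ℤ) : S) * (5 : S) ^ n) * (DD * (((u' : ℤ) : S) * (3 : S) ^ n))
        = ((v' : ℤ) : S) * ((u' : ℤ) : S) * DD * (DD * ((3 : S) ^ n * (5 : S) ^ n)) := by ring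
      _ = ((v' : ℤ) : S) * ((u' : ℤ) : S) * DD * (DD * (15 : S) ^ n) := by rw [pow35]
      _ = 0 := by rw [hDD15, mul_zero]
  have hE2E3 : E2 * E3 = 0 := by
    rw [hE3def]
    calc E2 * (DD * (((v' : ℤ) : S) * (5 : S) ^ n))
        = ((v' : ℤ) : S) * (5 : S) ^ n * (E2 * DD) := by ring
      _ = 0 := by rw [hE2D, mul_zero]
  have hE2E5 : E2 * E5 = 0 := by
    rw [hE5def]
    calc E2 * (DD * (((u' : ℤ) : S) * (3 : S) ^ n))
        = ((u' : ℤ) : S) * (3 : S) ^ n * (E2 * DD) := by ring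
      _ = 0 := by rw [hE2D, mul_zero]
  have hsum1 : E2 + E3 + E5 = 1 := by
    rw [hE3def, hE5def]
    linear_combination DD * hc2 + hc1
  have he3 : E3 * E3 = E3 := by linear_combination E3 * hsum1 - hE2E3 - hE3E5
  have he5 : E5 * E5 = E5 := by
    linear_combination E5 * hsum1 - hE2E5 - (E5 + 0) * 0 - hE3E5
  have h2E2 : (2 : S) ^ n * E2 = 0 := by
    rw [hE2def]
    calc (2 : S) ^ n * (((v : ℤ) : S) * (15 : S) ^ n)
        = ((v : ℤ) : S) * ((2 : S) ^ n * (15 : S) ^ n) := by ring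
      _ = ((v : ℤ) : S) * (30 : S) ^ n := by rw [pow230]
      _ = 0 := by rw [h30n, mul_zero]
  have h3E3 : (3 : S) ^ n * E3 = 0 := by
    rw [hE3def]
    calc (3 : S) ^ n * (DD * (((v' : ℤ) : S) * (5 : S) ^ n))
        = ((v' : ℤ) : S) * ((3 : S) ^ n * (5 : S) ^ n) * DD := by ring
      _ = ((v' : ℤ) : S) * (15 : S) ^ n * DD := by rw [pow35]
      _ = ((v' : ℤ) : S) * (DD * (15 : S) ^ n) := by ring
      _ = 0 := by rw [hDD15, mul_zero]
  have h5E5 : (5 : S) ^ n * E5 = 0 := by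
    rw [hE5def]
    calc (5 : S) ^ n * (DD * (((u' : ℤ) : S) * (3 : S) ^ n))
        = ((u' : ℤ) : S) * ((3 : S) ^ n * (5 : S) ^ n) * DD := by ring
      _ = ((u' : ℤ) : S) * (15 : S) ^ n * DD := by rw [pow35]
      _ = ((u' : ℤ) : S) * (DD * (15 : S) ^ n) := by ring
      _ = 0 := by rw [hDD15, mul_zero]
  have n2 : IsNilpotent ((2 : S) * E2) := ⟨n, by rw [mul_pow, hndef, idem_pow he2 k0, ← hndef, h2E2]⟩
  have n3 : IsNilpotent ((3 : S) * E3) := ⟨n, by rw [mul_pow, hndef, idem_pow he3 k0, ← hndef, h3E3]⟩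
  have n5 : IsNilpotent ((5 : S) * E5) := ⟨n, by rw [mul_pow, hndef, idem_pow he5 k0, ← hndef, h5E5]⟩
  -- ===== corner 2 =====
  have hnu2 : IsNilpotent ((a * a - a) * E2) := by
    apply nof_pow (k := 6)
    have key : ((a * a - a) * E2) ^ 6 =
        (a ^ 10 - 5 * a ^ 6 + 4 * a ^ 2) * ((a - 1) ^ 2 * E2) +
        ((2 : S) * E2) * (-2*a^2 + 4*a^3 - 2*a^4 + 3*a^6 - 8*a^7 + 10*a^8 - 10*a^9 + 7*a^10 - 2*a^11) := by
      have hE6 : E2 ^ 6 = E2 := by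
        calc E2 ^ 6 = E2 ^ (5 + 1) := by norm_num
          _ = E2 := idem_pow he2 5
      calc ((a * a - a) * E2) ^ 6 = (a * a - a) ^ 6 * E2 ^ 6 := by ring
        _ = (a * a - a) ^ 6 * E2 := by rw [hE6]
        _ = _ := by ring
    rw [key]
    exact nadd (nmulr _ hg0) (nmulr _ n2)
  set b2 : S := a * E2 with hb2def
  have hb2e : b2 * E2 = b2 := by rw [hb2def]; linear_combination a * he2
  have hb2nil : IsNilpotent (b2 * b2 - b2) := by
    have : b2 * b2 - b2 = (a * a - a) * E2 := by
      rw [hb2def]; linear_combination (a * a) * he2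
    rw [this]; exact hnu2
  obtain ⟨p2, hp2, hp2e, hw2⟩ := corner2 he2 hb2e hb2nil
  -- ===== corner 3 =====
  have s30 : IsNilpotent ((a ^ 5 - a) * E3) := by
    apply nof_pow (k := 2)
    have key : ((a ^ 5 - a) * E3) ^ 2 =
        (a ^ 10 - 5 * a ^ 6 + 4 * a ^ 2) * E3 + ((3 : S) * E3) * (a ^ 6 - a ^ 2) := by
      calc ((a ^ 5 - a) * E3) ^ 2 = (a ^ 5 - a) ^ 2 * (E3 * E3) := by ring
        _ = (a ^ 5 - a) ^ 2 * E3 := by rw [he3]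
        _ = _ := by ring
    rw [key]
    exact nadd (nmulr _ hg0) (nmulr _ n3)
  have s31 : IsNilpotent (((a + 1) ^ 5 - (a + 1)) * E3) := by
    apply nof_pow (k := 2)
    have key : (((a + 1) ^ 5 - (a + 1)) * E3) ^ 2 =
        ((a + 1) ^ 10 - 5 * (a + 1) ^ 6 + 4 * (a + 1) ^ 2) * E3 +
          ((3 : S) * E3) * ((a + 1) ^ 6 - (a + 1) ^ 2) := by
      calc (((a + 1) ^ 5 - (a + 1)) * E3) ^ 2
          = ((a + 1) ^ 5 - (a + 1)) ^ 2 * (E3 * E3) := by ring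
        _ = ((a + 1) ^ 5 - (a + 1)) ^ 2 * E3 := by rw [he3]
        _ = _ := by ring
    rw [key]
    exact nadd (nmulr _ hg1) (nmulr _ n3)
  have hnu3 : IsNilpotent ((a ^ 3 - a) * E3) := by
    have key : (a ^ 3 - a) * E3 =
        ((a ^ 5 - a) * E3) * a + (((a + 1) ^ 5 - (a + 1)) * E3) * (2 + 2 * a) +
          ((3 : S) * E3) * (-3*a - 9*a^2 - 13*a^3 - 10*a^4 - 4*a^5 - a^6) := by
      ring
    rw [key]
    exact nadd (nadd (nmulr _ s30) (nmulr _ s31)) (nmulr _ n3)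
  -- inverse of 2 modulo 3^n
  obtain ⟨nn3, c3, hnn3⟩ := int_inv 3 1 n
  set m3 : ℤ := 2 * nn3 with hm3def
  have h2m3 : (2 : ℤ) * m3 = 1 + 3 ^ n * c3 := by rw [hm3def]; linear_combination hnn3
  set t3 : S := ((m3 : ℤ) : S) * E3 with ht3def
  have ht3e : t3 * E3 = t3 := by rw [ht3def]; linear_combination ((m3 : ℤ) : S) * he3
  have h2t3 : 2 * t3 = E3 := by
    have hcast : (2 : S) * ((m3 : ℤ) : S) = 1 + (3 : S) ^ n * ((c3 : ℤ) : S) := by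
      have h := congrArg (fun t : ℤ => ((t : S))) h2m3
      push_cast at h
      exact h
    rw [ht3def]
    calc 2 * (((m3 : ℤ) : S) * E3) = ((2 : S) * ((m3 : ℤ) : S)) * E3 := by ring
      _ = (1 + (3 : S) ^ n * ((c3 : ℤ) : S)) * E3 := by rw [hcast]
      _ = E3 + ((c3 : ℤ) : S) * ((3 : S) ^ n * E3) := by ring
      _ = E3 := by rw [h3E3, mul_zero, add_zero]
  set z3 : S := a * E3 with hz3def
  have hz3e : z3 * E3 = z3 := by rw [hz3def]; linear_combination a * he3
  have hz3nil : IsNilpotent (z3 ^ 3 - z3) := by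
    have : z3 ^ 3 - z3 = (a ^ 3 - a) * E3 := by
      rw [hz3def]; linear_combination (a ^ 3 * (E3 + 1)) * he3
    rw [this]; exact hnu3
  obtain ⟨p3, hp3, hp3e, hw3⟩ := trip he3 hz3e h2t3 ht3e hz3nil
  -- ===== corner 5 =====
  have t50 : IsNilpotent ((a ^ 10 - a ^ 2) * E5) := by
    have key : (a ^ 10 - a ^ 2) * E5 =
        (a ^ 10 - 5 * a ^ 6 + 4 * a ^ 2) * E5 + ((5 : S) * E5) * (a ^ 6 - a ^ 2) := by ring
    rw [key]
    exact nadd (nmulr _ hg0) (nmulr _ n5)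
  have t51 : IsNilpotent (((a + 1) ^ 10 - (a + 1) ^ 2) * E5) := by
    have key : ((a + 1) ^ 10 - (a + 1) ^ 2) * E5 =
        ((a + 1) ^ 10 - 5 * (a + 1) ^ 6 + 4 * (a + 1) ^ 2) * E5 +
          ((5 : S) * E5) * ((a + 1) ^ 6 - (a + 1) ^ 2) := by ring
    rw [key]
    exact nadd (nmulr _ hg1) (nmulr _ n5)
  have hnu5 : IsNilpotent ((a ^ 5 - a) * E5) := by
    have key : (a ^ 5 - a) * E5 =
        ((a ^ 10 - a ^ 2) * E5) * 2 + (((a + 1) ^ 10 - (a + 1) ^ 2) * E5) * 3 +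
          ((5 : S) * E5) * (-5*a - 26*a^2 - 72*a^3 - 126*a^4 - 151*a^5 - 126*a^6
            - 72*a^7 - 27*a^8 - 6*a^9 - a^10) := by
      ring
    rw [key]
    exact nadd (nadd (nmulr _ t50) (nmulr _ t51)) (nmulr _ n5)
  -- inverse of 2 modulo 5^n
  obtain ⟨nn5, c5, hnn5⟩ := int_inv 5 3 n
  set m5 : ℤ := 8 * nn5 with hm5def
  have h2m5 : (2 : ℤ) * m5 = 1 + 5 ^ n * c5 := by rw [hm5def]; linear_combination hnn5
  have hcast5 : (2 : S) * ((m5 : ℤ) : S) = 1 + (5 : S) ^ n * ((c5 : ℤ) : S) := by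
    have h := congrArg (fun t : ℤ => ((t : S))) h2m5
    push_cast at h
    exact h
  set b : S := a * E5 with hbdef
  have hbe : b * E5 = b := by rw [hbdef]; linear_combination a * he5
  have hb5 : IsNilpotent (b ^ 5 - b) := by
    have : b ^ 5 - b = (a ^ 5 - a) * E5 := by
      rw [hbdef]
      linear_combination (a ^ 5 * (E5 ^ 3 + E5 ^ 2 + E5 + 1)) * he5
    rw [this]; exact hnu5
  set hh : S := ((m5 : ℤ) : S) * E5 with hhdef
  have hhe : hh * E5 = hh := by rw [hhdef]; linear_combination ((m5 : ℤ) : S) * he5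
  have h2hh : 2 * hh = E5 := by
    rw [hhdef]
    calc 2 * (((m5 : ℤ) : S) * E5) = ((2 : S) * ((m5 : ℤ) : S)) * E5 := by ring
      _ = (1 + (5 : S) ^ n * ((c5 : ℤ) : S)) * E5 := by rw [hcast5]
      _ = E5 + ((c5 : ℤ) : S) * ((5 : S) ^ n * E5) := by ring
      _ = E5 := by rw [h5E5, mul_zero, add_zero]
  set x5 : S := hh * (2 * E5 - b * b) * (b * b + E5) with hx5def
  set y5 : S := hh * b * (b * b * b - b) with hy5def
  have hx5e : x5 * E5 = x5 := by
    rw [hx5def]; linear_combination ((2 * E5 - b * b) * (b * b + E5)) * hhe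
  have hy5e : y5 * E5 = y5 := by
    rw [hy5def]; linear_combination (b * (b * b * b - b)) * hhe
  have hsum5 : x5 + y5 = E5 := by
    rw [hx5def, hy5def]
    linear_combination (hh * b) * hbe + E5 ^ 2 * h2hh + (E5 + 1) * he5
  have hxy5 : IsNilpotent (x5 * y5) := by
    have key : x5 * y5 = (b ^ 5 - b) * (hh * hh * b * (2 * E5 - b * b)) := by
      rw [hx5def, hy5def]
      linear_combination (hh * hh * b * (2 * E5 - b * b) * (b * b - 1)) * hbe
    rw [key]
    exact nmulr _ hb5
  obtain ⟨Eb, U5, V5, M5, hEbEb, hEbe, hcompl5, hEbform⟩ := split he5 hx5e hy5e hsum5 hxy5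
  have fact1 : (b * b * b - b) * x5 = (b ^ 5 - b) * (hh * (2 * E5 - b * b)) := by
    rw [hx5def]
    linear_combination (hh * (2 * E5 - b * b) * (b * b - 1)) * hbe
  have fact2 : (b * b + E5) * y5 = (b ^ 5 - b) * (hh * b) := by
    rw [hy5def]
    linear_combination (hh * b * (b * b - 1)) * hbe
  have factA : IsNilpotent ((b * b * b - b) * (E5 - Eb)) := by
    have key : (b * b * b - b) * (E5 - Eb) =
        (b ^ 5 - b) * (hh * (2 * E5 - b * b) * (U5 * x5 ^ M5)) := by
      rw [hcompl5, pow_succ]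
      linear_combination (U5 * x5 ^ M5) * fact1
    rw [key]
    exact nmulr _ hb5
  have factB : IsNilpotent ((b * b + E5) * Eb) := by
    have key : (b * b + E5) * Eb = (b ^ 5 - b) * (hh * b * (V5 * y5 ^ M5)) := by
      rw [hEbform, pow_succ]
      linear_combination (V5 * y5 ^ M5) * fact2
    rw [key]
    exact nmulr _ hb5
  -- the {0, ±1} part of corner 5
  set eA : S := E5 - Eb with heAdef
  have heA : eA * eA = eA := by
    rw [heAdef]; linear_combination he5 - 2 * hEbe + hEbEb
  have h5nEb : (5 : S) ^ n * Eb = 0 := by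
    calc (5 : S) ^ n * Eb = (5 : S) ^ n * (Eb * E5) := by rw [hEbe]
      _ = Eb * ((5 : S) ^ n * E5) := by ring
      _ = 0 := by rw [h5E5, mul_zero]
  have h5eA : (5 : S) ^ n * eA = 0 := by
    rw [heAdef]
    calc (5 : S) ^ n * (E5 - Eb) = (5 : S) ^ n * E5 - (5 : S) ^ n * Eb := by ring
      _ = 0 := by rw [h5E5, h5nEb, sub_zero]
  set zA : S := b * eA with hzAdef
  have hzAe : zA * eA = zA := by rw [hzAdef]; linear_combination b * heA
  have hzA3 : IsNilpotent (zA ^ 3 - zA) := by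
    have key : zA ^ 3 - zA = (b * b * b - b) * eA := by
      rw [hzAdef]; linear_combination (b ^ 3 * (eA + 1)) * heA
    rw [key, heAdef]
    exact factA
  set tA : S := ((m5 : ℤ) : S) * eA with htAdef
  have htAe : tA * eA = tA := by rw [htAdef]; linear_combination ((m5 : ℤ) : S) * heA
  have h2tA : 2 * tA = eA := by
    rw [htAdef]
    calc 2 * (((m5 : ℤ) : S) * eA) = ((2 : S) * ((m5 : ℤ) : S)) * eA := by ring
      _ = (1 + (5 : S) ^ n * ((c5 : ℤ) : S)) * eA := by rw [hcast5]
      _ = eA + ((c5 : ℤ) : S) * ((5 : S) ^ n * eA) := by ring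
      _ = eA := by rw [h5eA, mul_zero, add_zero]
  obtain ⟨pA, hpA, hpAe, hwA⟩ := trip heA hzAe h2tA htAe hzA3
  -- the {±α} part of corner 5
  set yB : S := b * Eb with hyBdef
  have hyBe : yB * Eb = yB := by rw [hyBdef]; linear_combination b * hEbEb
  have hyB2 : IsNilpotent (yB * yB + Eb) := by
    have key : yB * yB + Eb = (b * b + E5) * Eb := by
      rw [hyBdef]; linear_combination (b * b) * hEbEb - hEbe
    rw [key]
    exact factB
  have h5nilEb : IsNilpotent ((5 : S) * Eb) :=
    ⟨n, by rw [mul_pow, hndef, idem_pow hEbEb k0, ← hndef, h5nEb]⟩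
  obtain ⟨αi, si, ri, hαi, hri⟩ := alpha_exists k0
  rw [← hndef] at hαi
  obtain ⟨nnα, cα, hnnα⟩ := int_inv 5 ri n
  have h2α : 2 * αi * nnα = 1 + 5 ^ n * cα := by linear_combination nnα * hri + hnnα
  obtain ⟨pB, wB, hpB, hpBe, hwB, hyBeq⟩ :=
    alpha_part hEbEb hyBe hαi hri h2α h5nEb h5nilEb hyB2
  -- ===== assembly =====
  have hE2Eb : E2 * Eb = 0 := by
    calc E2 * Eb = E2 * (Eb * E5) := by rw [hEbe]
      _ = Eb * (E2 * E5) := by ring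
      _ = 0 := by rw [hE2E5, mul_zero]
  have hE3Eb : E3 * Eb = 0 := by
    calc E3 * Eb = E3 * (Eb * E5) := by rw [hEbe]
      _ = Eb * (E3 * E5) := by ring
      _ = 0 := by rw [hE3E5, mul_zero]
  have hE2eA : E2 * eA = 0 := by
    rw [heAdef]
    calc E2 * (E5 - Eb) = E2 * E5 - E2 * Eb := by ring
      _ = 0 := by rw [hE2E5, hE2Eb, sub_zero]
  have hE3eA : E3 * eA = 0 := by
    rw [heAdef]
    calc E3 * (E5 - Eb) = E3 * E5 - E3 * Eb := by ring
      _ = 0 := by rw [hE3E5, hE3Eb, sub_zero]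
  have heAEb : eA * Eb = 0 := by
    rw [heAdef]; linear_combination hEbe - hEbEb
  have hp2p3 : p2 * p3 = 0 := by
    calc p2 * p3 = (p2 * E2) * (p3 * E3) := by rw [hp2e, hp3e]
      _ = (p2 * p3) * (E2 * E3) := by ring
      _ = 0 := by rw [hE2E3, mul_zero]
  have hp2pA : p2 * pA = 0 := by
    calc p2 * pA = (p2 * E2) * (pA * eA) := by rw [hp2e, hpAe]
      _ = (p2 * pA) * (E2 * eA) := by ring
      _ = 0 := by rw [hE2eA, mul_zero]
  have hp2pB : p2 * pB = 0 := by
    calc p2 * pB = (p2 * E2) * (pB * Eb) := by rw [hp2e, hpBe]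
      _ = (p2 * pB) * (E2 * Eb) := by ring
      _ = 0 := by rw [hE2Eb, mul_zero]
  have hp3pA : p3 * pA = 0 := by
    calc p3 * pA = (p3 * E3) * (pA * eA) := by rw [hp3e, hpAe]
      _ = (p3 * pA) * (E3 * eA) := by ring
      _ = 0 := by rw [hE3eA, mul_zero]
  have hp3pB : p3 * pB = 0 := by
    calc p3 * pB = (p3 * E3) * (pB * Eb) := by rw [hp3e, hpBe]
      _ = (p3 * pB) * (E3 * Eb) := by ring
      _ = 0 := by rw [hE3Eb, mul_zero]
  have hpApB : pA * pB = 0 := by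
    calc pA * pB = (pA * eA) * (pB * Eb) := by rw [hpAe, hpBe]
      _ = (pA * pB) * (eA * Eb) := by ring
      _ = 0 := by rw [heAEb, mul_zero]
  have h23 : (p2 + p3) ^ 3 = p2 + p3 := tri_add hp2 hp3 hp2p3
  have h23A : ((p2 + p3) + pA) ^ 3 = (p2 + p3) + pA := by
    refine tri_add h23 hpA ?_
    calc (p2 + p3) * pA = p2 * pA + p3 * pA := by ring
      _ = 0 := by rw [hp2pA, hp3pA, add_zero]
  have hP : ((p2 + p3 + pA) + pB) ^ 3 = (p2 + p3 + pA) + pB := by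
    refine tri_add h23A hpB ?_
    calc (p2 + p3 + pA) * pB = p2 * pB + p3 * pB + pA * pB := by ring
      _ = 0 := by rw [hp2pB, hp3pB, hpApB]; ring
  have hsplit_a : a = b2 + z3 + b := by
    rw [hb2def, hz3def, hbdef]
    linear_combination (-a) * hsum1
  have hzy : zA + yB = b := by
    rw [hzAdef, hyBdef, heAdef]
    linear_combination hbe
  refine ⟨p2 + p3 + pA + pB, pB, (b2 - p2) + (z3 - p3) + (zA - pA) + wB, hP, hpB, ?_, ?_⟩
  · exact nadd (nadd (nadd hw2 hw3) hwA) hwB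
  · linear_combination hsplit_a - hzy + hyBeq

end CommCore

/-- A ring is Zhou nil-clean if every element is the sum of two tripotents
and a nilpotent that pairwise commute. -/
def ZhouNilClean (R : Type*) [Ring R] : Prop :=
  ∀ a : R, ∃ p q w : R, p ^ 3 = p ∧ q ^ 3 = q ∧ IsNilpotent w ∧
    Commute p q ∧ Commute p w ∧ Commute q w ∧ a = p + q + w

section MainProof
variable {R : Type*} [Ring R]

private lemma isNilpotent_mk {S : Subring R} {x : S} (h : IsNilpotent (x : R)) :
    IsNilpotent x := by
  obtain ⟨n, hn⟩ := h
  exact ⟨n, Subtype.ext (by push_cast; exact hn)⟩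

private lemma isNilpotent_coe {S : Subring R} {x : S} (h : IsNilpotent x) :
    IsNilpotent (x : R) := h.map (SubringClass.subtype S)

private lemma npow_gen {M : Type*} [MonoidWithZero M] {x : M} {k : ℕ}
    (h : IsNilpotent (x ^ k)) : IsNilpotent x := by
  obtain ⟨n, hn⟩ := h
  exact ⟨k * n, by rw [pow_mul, hn]⟩

private lemma gnil
    (H : ∀ x : R, ∃ p q w : R, p ^ 3 = p ∧ q ^ 3 = q ∧ IsNilpotent w ∧
      Commute p q ∧ Commute p w ∧ Commute q w ∧ x ^ 2 = p + q + w) (x : R) :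
    IsNilpotent (x ^ 10 - 5 * x ^ 6 + 4 * x ^ 2) := by
  obtain ⟨p, q, w, hp, hq, hw, hpq, hpw, hqw, hx⟩ := H x
  have hs : ∀ u ∈ ({p, q, w} : Set R), ∀ v ∈ ({p, q, w} : Set R), u * v = v * u := by
    intro u hu v hv
    simp only [Set.mem_insert_iff, Set.mem_singleton_iff] at hu hv
    rcases hu with rfl | rfl | rfl <;> rcases hv with rfl | rfl | rfl
    exacts [rfl, hpq.eq, hpw.eq, hpq.symm.eq, rfl, hqw.eq, hpw.symm.eq, hqw.symm.eq, rfl]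
  letI : CommRing (Subring.closure ({p, q, w} : Set R)) := Subring.closureCommRingOfComm hs
  have hpm : p ∈ Subring.closure ({p, q, w} : Set R) := Subring.subset_closure (by simp)
  have hqm : q ∈ Subring.closure ({p, q, w} : Set R) := Subring.subset_closure (by simp)
  have hwm : w ∈ Subring.closure ({p, q, w} : Set R) := Subring.subset_closure (by simp)
  have hxm : x ^ 2 ∈ Subring.closure ({p, q, w} : Set R) := by
    rw [hx]; exact add_mem (add_mem hpm hqm) hwm
  set P : Subring.closure ({p, q, w} : Set R) := ⟨p, hpm⟩ with hPdef
  set Q : Subring.closure ({p, q, w} : Set R) := ⟨q, hqm⟩ with hQdef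
  set W : Subring.closure ({p, q, w} : Set R) := ⟨w, hwm⟩ with hWdef
  set X : Subring.closure ({p, q, w} : Set R) := ⟨x ^ 2, hxm⟩ with hXdef
  have hPc : (P : R) = p := rfl
  have hQc : (Q : R) = q := rfl
  have hWc : (W : R) = w := rfl
  have hXc : (X : R) = x ^ 2 := rfl
  have hXeq : X = P + Q + W := by
    apply Subtype.ext
    push_cast [hPc, hQc, hWc, hXc]
    exact hx
  have hP3 : P ^ 3 = P := by
    apply Subtype.ext
    push_cast [hPc]
    exact hp
  have hQ3 : Q ^ 3 = Q := by
    apply Subtype.ext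
    push_cast [hQc]
    exact hq
  have hWnil : IsNilpotent W := isNilpotent_mk (by rw [hWc]; exact hw)
  have hnil : IsNilpotent (X ^ 5 - 5 * X ^ 3 + 4 * X) := by
    have e : X ^ 5 - 5 * X ^ 3 + 4 * X = W *
        (5*(P+Q)^4 + 10*(P+Q)^3*W + 10*(P+Q)^2*W^2 + 5*(P+Q)*W^3 + W^4
          - 15*(P+Q)^2 - 15*(P+Q)*W - 5*W^2 + 4) := by
      rw [hXeq]
      linear_combination (P^2 + 5*P*Q + 10*Q^2 - 4) * hP3 + (10*P^2 + 5*P*Q + Q^2 - 4) * hQ3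
    rw [e]
    exact (Commute.all W _).isNilpotent_mul_right hWnil
  have e5 : (((5 : Subring.closure ({p, q, w} : Set R))) : R) = 5 := by norm_cast
  have e4 : (((4 : Subring.closure ({p, q, w} : Set R))) : R) = 4 := by norm_cast
  have hcoe : ((X ^ 5 - 5 * X ^ 3 + 4 * X : Subring.closure ({p, q, w} : Set R)) : R)
      = x ^ 10 - 5 * x ^ 6 + 4 * x ^ 2 := by
    push_cast [hXc, e5, e4]
    rw [← pow_mul, ← pow_mul]
  have := isNilpotent_coe hnil
  rwa [hcoe] at this

end MainProof

theorem stmt_15 (R : Type*) [Ring R] :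
    ZhouNilClean R ↔
      ∀ x : R, ∃ p q w : R, p ^ 3 = p ∧ q ^ 3 = q ∧ IsNilpotent w ∧
        Commute p q ∧ Commute p w ∧ Commute q w ∧ x ^ 2 = p + q + w := by
  constructor
  · intro h x
    exact h (x ^ 2)
  · intro H a
    have hg := gnil H
    have h720 : IsNilpotent ((720 : R)) := by
      have h2 := hg 2
      norm_num at h2
      exact h2
    have h30 : IsNilpotent ((30 : R)) := by
      apply npow_gen (k := 4)
      have e : (30 : R) ^ 4 = 720 * 1125 := by norm_num
      rw [e]
      have c : Commute (720 : R) (1125 : R) := by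
        show (720 : R) * 1125 = 1125 * 720
        norm_num
      exact c.isNilpotent_mul_right h720
    have hsa : ∀ u ∈ ({a} : Set R), ∀ v ∈ ({a} : Set R), u * v = v * u := by
      intro u hu v hv
      simp only [Set.mem_singleton_iff] at hu hv
      subst hu; subst hv; rfl
    letI : CommRing (Subring.closure ({a} : Set R)) := Subring.closureCommRingOfComm hsa
    have ham : a ∈ Subring.closure ({a} : Set R) := Subring.subset_closure rfl
    set A : Subring.closure ({a} : Set R) := ⟨a, ham⟩ with hAdef
    have hAc : (A : R) = a := rfl
    have h30' : IsNilpotent ((30 : Subring.closure ({a} : Set R))) := by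
      apply isNilpotent_mk
      have e : (((30 : Subring.closure ({a} : Set R))) : R) = (30 : R) := by norm_cast
      rw [e]; exact h30
    have hg0' : IsNilpotent (A ^ 10 - 5 * A ^ 6 + 4 * A ^ 2) := by
      apply isNilpotent_mk
      have e5 : (((5 : Subring.closure ({a} : Set R))) : R) = 5 := by norm_cast
      have e4 : (((4 : Subring.closure ({a} : Set R))) : R) = 4 := by norm_cast
      have e : ((A ^ 10 - 5 * A ^ 6 + 4 * A ^ 2 :
          Subring.closure ({a} : Set R)) : R) = a ^ 10 - 5 * a ^ 6 + 4 * a ^ 2 := by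
        push_cast [hAc, e5, e4]
        rfl
      rw [e]; exact hg a
    have hg1' : IsNilpotent ((A + 1) ^ 10 - 5 * (A + 1) ^ 6 + 4 * (A + 1) ^ 2) := by
      apply isNilpotent_mk
      have e5 : (((5 : Subring.closure ({a} : Set R))) : R) = 5 := by norm_cast
      have e4 : (((4 : Subring.closure ({a} : Set R))) : R) = 4 := by norm_cast
      have e : (((A + 1) ^ 10 - 5 * (A + 1) ^ 6 + 4 * (A + 1) ^ 2 :
          Subring.closure ({a} : Set R)) : R)
          = (a + 1) ^ 10 - 5 * (a + 1) ^ 6 + 4 * (a + 1) ^ 2 := by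
        push_cast [hAc, e5, e4]
        rfl
      rw [e]; exact hg (a + 1)
    obtain ⟨p, q, w, hp, hq, hw, heq⟩ := core A h30' hg0' hg1'
    refine ⟨(p : R), (q : R), (w : R), ?_, ?_, isNilpotent_coe hw, ?_, ?_, ?_, ?_⟩
    · exact_mod_cast congrArg Subtype.val hp
    · exact_mod_cast congrArg Subtype.val hq
    · show (p : R) * (q : R) = (q : R) * (p : R)
      exact_mod_cast congrArg Subtype.val (mul_comm p q)
    · show (p : R) * (w : R) = (w : R) * (p : R)
      exact_mod_cast congrArg Subtype.val (mul_comm p w)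
    · show (q : R) * (w : R) = (w : R) * (q : R)
      exact_mod_cast congrArg Subtype.val (mul_comm q w)
    · have h := congrArg Subtype.val heq
      rw [hAc] at h
      push_cast at h
      exact h
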